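/- arXiv:0907.3856 — 3 statements merged into one kernel-verified Lean document; each statement's English description precedes it below -/
import Mathlib

section
/- The function f(ζ) = (15/16) ∑_{k≥1} k/((k²-1/4)(k²-9/4)) · (-ζ)^k satisfies, on the open unit disk, the differential equation D²f + (1/2)·((1-ζ)/(1+ζ))·Df = (3/2)·f, where D = ζ·d/dζ. -/
noncomputable def stmt1Coeff (k : ℕ) : ℂ :=
  (15 / 16) * (-1) ^ k * (k : ℂ) / (((k : ℂ) ^ 2 - 1 / 4) * ((k : ℂ) ^ 2 - 9 / 4))

noncomputable def stmt1f (ζ : ℂ) : ℂ := ∑' k : ℕ, stmt1Coeff k * ζ ^ k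

open Filter Topology Metric


lemma stmt1_d1 (k : ℕ) : ((k:ℂ)^2 - 1/4) ≠ 0 := by
  have h : ((k:ℂ)^2 - 1/4) = (((k:ℝ)^2 - 1/4 : ℝ) : ℂ) := by push_cast; ring
  rw [h, Complex.ofReal_ne_zero]
  rcases Nat.eq_zero_or_pos k with hk | hk
  · subst hk; norm_num
  · have h1 : (1:ℝ) ≤ (k:ℝ) := by exact_mod_cast hk
    nlinarith

lemma stmt1_d2 (k : ℕ) : ((k:ℂ)^2 - 9/4) ≠ 0 := by
  have h : ((k:ℂ)^2 - 9/4) = (((k:ℝ)^2 - 9/4 : ℝ) : ℂ) := by push_cast; ring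
  rw [h, Complex.ofReal_ne_zero]
  match k with
  | 0 => norm_num
  | 1 => norm_num
  | (n+2) =>
    have h1 : (2:ℝ) ≤ ((n+2 : ℕ):ℝ) := by push_cast; linarith [Nat.cast_nonneg (α := ℝ) n]
    nlinarith

lemma stmt1_rec (k : ℕ) :
    ((k:ℂ)^2 - (k:ℂ)/2 - 3/2) * stmt1Coeff k
      = -((((k:ℂ)+1)^2 + ((k:ℂ)+1)/2 - 3/2) * stmt1Coeff (k+1)) := by
  have e1 := stmt1_d1 k
  have e2 := stmt1_d2 k
  have e3 : (((k:ℂ)+1)^2 - 1/4) ≠ 0 := by have := stmt1_d1 (k+1); push_cast at this; exact this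
  have e4 : (((k:ℂ)+1)^2 - 9/4) ≠ 0 := by have := stmt1_d2 (k+1); push_cast at this; exact this
  have l1 : ((k:ℂ)^2 - (k:ℂ)/2 - 3/2) * stmt1Coeff k
      = (((k:ℂ)^2 - (k:ℂ)/2 - 3/2) * ((15/16) * (-1)^k * (k:ℂ)))
        / (((k:ℂ)^2 - 1/4) * ((k:ℂ)^2 - 9/4)) := by
    unfold stmt1Coeff; ring
  have l2 : -((((k:ℂ)+1)^2 + ((k:ℂ)+1)/2 - 3/2) * stmt1Coeff (k+1))
      = (-((((k:ℂ)+1)^2 + ((k:ℂ)+1)/2 - 3/2) * ((15/16) * (-1)^k * (-1) * ((k:ℂ)+1))))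
        / ((((k:ℂ)+1)^2 - 1/4) * (((k:ℂ)+1)^2 - 9/4)) := by
    unfold stmt1Coeff; push_cast; rw [pow_succ]; ring
  rw [l1, l2, div_eq_div_iff (mul_ne_zero e1 e2) (mul_ne_zero e3 e4)]
  ring


lemma stmt1_coeff_real (k : ℕ) :
    stmt1Coeff k = (-1)^k *
      (((15/16 * (k:ℝ) / (((k:ℝ)^2 - 1/4) * ((k:ℝ)^2 - 9/4))) : ℝ) : ℂ) := by
  unfold stmt1Coeff; push_cast; ring

lemma stmt1_bnd2 (k : ℕ) : ‖(k:ℂ)^2 * stmt1Coeff k‖ ≤ 4 := by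
  rw [stmt1_coeff_real]
  have h : ‖(k:ℂ)^2 * ((-1)^k * (((15/16 * (k:ℝ) / (((k:ℝ)^2 - 1/4) * ((k:ℝ)^2 - 9/4))) : ℝ) : ℂ))‖
      = (k:ℝ)^2 * |15/16 * (k:ℝ) / (((k:ℝ)^2 - 1/4) * ((k:ℝ)^2 - 9/4))| := by
    rw [norm_mul, norm_mul, norm_pow, norm_pow, Complex.norm_natCast, Complex.norm_real,
      norm_neg, norm_one, one_pow, one_mul, Real.norm_eq_abs]
  rw [h]
  match k with
  | 0 => norm_num
  | 1 => norm_num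
  | (n+2) =>
    set x : ℝ := ((n+2 : ℕ) : ℝ) with hx
    have h2 : (2:ℝ) ≤ x := by rw [hx]; push_cast; linarith [Nat.cast_nonneg (α := ℝ) n]
    have hd1 : (0:ℝ) < x^2 - 1/4 := by nlinarith
    have hd2 : (0:ℝ) < x^2 - 9/4 := by nlinarith
    have habs : |15/16 * x / ((x^2 - 1/4) * (x^2 - 9/4))|
        = 15/16 * x / ((x^2 - 1/4) * (x^2 - 9/4)) := by
      apply abs_of_nonneg; positivity
    rw [habs, ← mul_div_assoc, div_le_iff₀ (by positivity)]
    nlinarith [sq_nonneg x, sq_nonneg (x-2), sq_nonneg (x^2-4)]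

lemma stmt1_bnd1 (k : ℕ) : ‖(k:ℂ) * stmt1Coeff k‖ ≤ 4 := by
  match k with
  | 0 => simp
  | (n+1) =>
    have h := stmt1_bnd2 (n+1)
    rw [norm_mul] at h ⊢
    rw [norm_pow] at h
    have h1 : (1:ℝ) ≤ ‖((n+1 : ℕ):ℂ)‖ := by
      rw [Complex.norm_natCast]; exact_mod_cast Nat.one_le_iff_ne_zero.mpr (Nat.succ_ne_zero n)
    nlinarith [norm_nonneg (stmt1Coeff (n+1)), norm_nonneg ((n+1 : ℕ):ℂ)]

lemma stmt1_bnd0 (k : ℕ) : ‖stmt1Coeff k‖ ≤ 4 := by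
  match k with
  | 0 => simp [stmt1Coeff]
  | (n+1) =>
    have h := stmt1_bnd1 (n+1)
    rw [norm_mul] at h
    have h1 : (1:ℝ) ≤ ‖((n+1 : ℕ):ℂ)‖ := by
      rw [Complex.norm_natCast]; exact_mod_cast Nat.one_le_iff_ne_zero.mpr (Nat.succ_ne_zero n)
    nlinarith [norm_nonneg (stmt1Coeff (n+1))]

lemma stmt1_summable (a : ℕ → ℂ) (C : ℝ) (h : ∀ k, ‖a k‖ ≤ C) {z : ℂ} (hz : ‖z‖ < 1) :
    Summable (fun k => a k * z^k) := by
  apply Summable.of_norm_bounded (g := fun k => C * ‖z‖^k)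
    ((summable_geometric_of_lt_one (norm_nonneg z) hz).mul_left C)
  intro k
  rw [norm_mul, norm_pow]
  exact mul_le_mul_of_nonneg_right (h k) (by positivity)

lemma stmt1_key (a : ℕ → ℂ) (C : ℝ) (h : ∀ k, ‖a k‖ ≤ C) {ζ : ℂ} (hζ : ‖ζ‖ < 1) :
    HasSum (fun k : ℕ => (k:ℂ) * a k * ζ^k) (ζ * deriv (fun z => ∑' k : ℕ, a k * z^k) ζ) := by
  have hC : 0 ≤ C := le_trans (norm_nonneg _) (h 0)
  set r : ℝ := (1 + ‖ζ‖)/2 with hr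
  have hr0 : 0 < r := by positivity
  have hr1 : r < 1 := by rw [hr]; linarith
  have hζr : ‖ζ‖ < r := by rw [hr]; linarith
  have hu : Summable (fun n : ℕ => (C/r) * ((n:ℝ) * r^n)) := by
    have h1 : ‖r‖ < 1 := by rwa [Real.norm_eq_abs, abs_of_pos hr0]
    have := (summable_pow_mul_geometric_of_norm_lt_one 1 h1).mul_left (C/r)
    simpa using this
  have hbound : ∀ (n : ℕ) (y : ℂ), y ∈ Metric.ball (0:ℂ) r →
      ‖a n * ((n:ℂ) * y^(n-1))‖ ≤ (C/r) * ((n:ℝ) * r^n) := by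
    intro n y hy
    have hyr : ‖y‖ ≤ r := le_of_lt (mem_ball_zero_iff.mp hy)
    match n with
    | 0 => simp
    | (m+1) =>
      have hme : (C/r) * (((m+1:ℕ):ℝ) * r^(m+1)) = C * (((m+1:ℕ):ℝ) * r^m) := by
        rw [pow_succ]; field_simp
      rw [hme]
      have hynorm : ‖a (m+1) * (((m+1:ℕ):ℂ) * y^(m+1-1))‖
          = ‖a (m+1)‖ * (((m+1:ℕ):ℝ) * ‖y‖^m) := by
        rw [Nat.add_sub_cancel, norm_mul, norm_mul, norm_pow, Complex.norm_natCast]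
      rw [hynorm]
      have hp : ‖y‖^m ≤ r^m := pow_le_pow_left₀ (norm_nonneg y) hyr m
      have hposm : (0:ℝ) ≤ ((m+1:ℕ):ℝ) := by positivity
      exact mul_le_mul (h (m+1)) (mul_le_mul_of_nonneg_left hp hposm)
        (by positivity) hC
  have hderiv : HasDerivAt (fun z => ∑' k : ℕ, a k * z^k)
      (∑' k : ℕ, a k * ((k:ℂ) * ζ^(k-1))) ζ := by
    apply hasDerivAt_tsum_of_isPreconnected hu Metric.isOpen_ball
      (convex_ball (0:ℂ) r).isPreconnected
      (fun n y _ => (hasDerivAt_pow n y).const_mul (a n))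
      (fun n y hy => hbound n y hy)
      (mem_ball_zero_iff.mpr hζr)
      (stmt1_summable a C h hζ)
      (mem_ball_zero_iff.mpr hζr)
  rw [hderiv.deriv]
  have hs : Summable (fun k => a k * ((k:ℂ) * ζ^(k-1))) :=
    Summable.of_norm_bounded hu (fun n => hbound n ζ (mem_ball_zero_iff.mpr hζr))
  have H := hs.hasSum.mul_left ζ
  have hfe : (fun k : ℕ => ζ * (a k * ((k:ℂ) * ζ^(k-1)))) = fun k : ℕ => (k:ℂ) * a k * ζ^k := by
    funext k
    match k with
    | 0 => simp
    | (m+1) =>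
      have : (m+1) - 1 = m := rfl
      rw [this, pow_succ]; push_cast; ring
  rwa [hfe] at H

/-- On the open unit disk (away from `-1`), `f` satisfies
`D²f + (1/2)((1-ζ)/(1+ζ)) Df = (3/2) f` where `D = ζ d/dζ`. -/
theorem stmt_1 :
    ∀ ζ : ℂ, ‖ζ‖ < 1 → ζ ≠ -1 →
      ζ * deriv (fun z => z * deriv stmt1f z) ζ
        + (1 / 2) * ((1 - ζ) / (1 + ζ)) * (ζ * deriv stmt1f ζ)
        = (3 / 2) * stmt1f ζ := by
  intro ζ hζ hζ1
  have hfdef : stmt1f = fun z => ∑' k : ℕ, stmt1Coeff k * z^k := rfl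
  -- basic sums
  have hsum0 : HasSum (fun k : ℕ => stmt1Coeff k * ζ^k) (stmt1f ζ) := by
    rw [hfdef]
    exact (stmt1_summable stmt1Coeff 4 stmt1_bnd0 hζ).hasSum
  have hsum1 : HasSum (fun k : ℕ => (k:ℂ) * stmt1Coeff k * ζ^k) (ζ * deriv stmt1f ζ) := by
    rw [hfdef]
    exact stmt1_key stmt1Coeff 4 stmt1_bnd0 hζ
  have hb1 : ∀ k : ℕ, ‖(fun k : ℕ => (k:ℂ) * stmt1Coeff k) k‖ ≤ 4 := stmt1_bnd1
  have gdef : deriv (fun z => z * deriv stmt1f z) ζ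
      = deriv (fun z => ∑' k : ℕ, ((k:ℂ) * stmt1Coeff k) * z^k) ζ := by
    apply Filter.EventuallyEq.deriv_eq
    filter_upwards [Metric.isOpen_ball.mem_nhds (mem_ball_zero_iff.mpr hζ : ζ ∈ Metric.ball (0:ℂ) 1)]
      with z hz
    have hz1 : ‖z‖ < 1 := mem_ball_zero_iff.mp hz
    have := stmt1_key stmt1Coeff 4 stmt1_bnd0 hz1
    rw [← hfdef] at this
    exact this.tsum_eq.symm
  have hsum2 : HasSum (fun k : ℕ => (k:ℂ) * ((k:ℂ) * stmt1Coeff k) * ζ^k)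
      (ζ * deriv (fun z => z * deriv stmt1f z) ζ) := by
    rw [gdef]
    exact stmt1_key (fun k : ℕ => (k:ℂ) * stmt1Coeff k) 4 hb1 hζ
  -- telescoping
  set T : ℕ → ℂ := fun k => ((k:ℂ)^2 + (k:ℂ)/2 - 3/2) * stmt1Coeff k * ζ^k with hT
  have hT0 : T 0 = 0 := by simp [hT, stmt1Coeff]
  have hTnorm : ∀ n : ℕ, ‖T n‖ ≤ 12 * ‖ζ‖^n := by
    intro n
    have e : ((n:ℂ)^2 + (n:ℂ)/2 - 3/2) * stmt1Coeff n
        = (n:ℂ)^2 * stmt1Coeff n + ((1/2 : ℂ) * ((n:ℂ) * stmt1Coeff n)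
          + (-(3/2) : ℂ) * stmt1Coeff n) := by ring
    have hhalf : ‖(1/2 : ℂ)‖ = 1/2 := by
      rw [show (1/2 : ℂ) = ((1/2 : ℝ) : ℂ) by norm_num, Complex.norm_real]; norm_num
    have h32 : ‖(-(3/2) : ℂ)‖ = 3/2 := by
      rw [show (-(3/2) : ℂ) = ((-(3/2) : ℝ) : ℂ) by norm_num, Complex.norm_real]
      rw [Real.norm_eq_abs]; norm_num
    have hb : ‖((n:ℂ)^2 + (n:ℂ)/2 - 3/2) * stmt1Coeff n‖ ≤ 12 := by
      rw [e]
      refine (norm_add_le _ _).trans ?_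
      refine le_trans (add_le_add le_rfl (norm_add_le _ _)) ?_
      rw [norm_mul (1/2 : ℂ), norm_mul (-(3/2) : ℂ), hhalf, h32]
      nlinarith [stmt1_bnd2 n, stmt1_bnd1 n, stmt1_bnd0 n]
    calc ‖T n‖ = ‖((n:ℂ)^2 + (n:ℂ)/2 - 3/2) * stmt1Coeff n‖ * ‖ζ‖^n := by
          rw [hT]; rw [norm_mul, norm_pow]
      _ ≤ 12 * ‖ζ‖^n := mul_le_mul_of_nonneg_right hb (by positivity)
  have hTlim : Tendsto T atTop (𝓝 0) := by
    rw [tendsto_zero_iff_norm_tendsto_zero]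
    apply squeeze_zero (fun n => norm_nonneg _) hTnorm
    have := (tendsto_pow_atTop_nhds_zero_of_lt_one (norm_nonneg ζ) hζ).const_mul (12:ℝ)
    simpa using this
  -- combined sum
  have Hcomb := ((hsum2.add (hsum2.mul_left ζ)).add
      ((hsum1.sub (hsum1.mul_left ζ)).mul_left (1/2))).sub
      ((hsum0.add (hsum0.mul_left ζ)).mul_left (3/2))
  have hfun : (fun k : ℕ =>
        ((k:ℂ) * ((k:ℂ) * stmt1Coeff k) * ζ^k + ζ * ((k:ℂ) * ((k:ℂ) * stmt1Coeff k) * ζ^k)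
          + 1/2 * ((k:ℂ) * stmt1Coeff k * ζ^k - ζ * ((k:ℂ) * stmt1Coeff k * ζ^k)))
          - 3/2 * (stmt1Coeff k * ζ^k + ζ * (stmt1Coeff k * ζ^k)))
      = fun k : ℕ => T k - T (k+1) := by
    funext k
    simp only [hT]
    push_cast
    linear_combination ζ^(k+1) * stmt1_rec k
  rw [hfun] at Hcomb
  have t2 : Tendsto (fun n : ℕ => ∑ k ∈ Finset.range n, (T k - T (k+1))) atTop (𝓝 0) := by
    have he : (fun n : ℕ => ∑ k ∈ Finset.range n, (T k - T (k+1))) = fun n => T 0 - T n := by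
      funext n; exact Finset.sum_range_sub' T n
    rw [he, hT0]
    simpa using hTlim.neg
  have hL := tendsto_nhds_unique Hcomb.tendsto_sum_nat t2
  -- final algebra
  have hne : (1 + ζ) ≠ 0 := fun h => hζ1 (by linear_combination h)
  have h2 : (1-ζ)/(1+ζ) * (1+ζ) = 1-ζ := div_mul_cancel₀ _ hne
  apply mul_left_cancel₀ hne
  linear_combination hL + (1/2 * (ζ * deriv stmt1f ζ)) * h2
end

section
/- For all real ζ with 0 < ζ < 1, (15/16) ∑_{k≥1} k/((k²-1/4)(k²-9/4)) · (-ζ)^k = (15/32)(1+ζ)²(ζ^{-1} - (1-ζ)·ζ^{-3/2}·arctan(ζ^{1/2})) - 5/8. -/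
open Real

lemma aux_hasSum (s : ℝ) (h0 : 0 < s) (h1 : s < 1) :
    HasSum (fun k : ℕ => (k : ℝ) / (((k : ℝ) ^ 2 - 1 / 4) * ((k : ℝ) ^ 2 - 9 / 4)) * (-(s^2)) ^ k)
      ((s^3/2) * Real.arctan s + (-1/6 + s^2/2)
        + ((s/2) * Real.arctan s + 1/2)
        + (-(1/(2*s)) * Real.arctan s)
        + (-(1/(2*s^3))) * (Real.arctan s - s)) := by
  have hsne : s ≠ 0 := ne_of_gt h0
  have H : HasSum (fun n : ℕ => (-1) ^ n * s ^ (2 * n + 1) / ((2 * n + 1 : ℕ) : ℝ))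
      (Real.arctan s) := Real.hasSum_arctan (by rw [Real.norm_eq_abs, abs_of_pos h0]; exact h1)
  -- four pieces
  have h1' : HasSum (fun k : ℕ => (-1:ℝ)^k * s^(2*k) / (2*(2*(k:ℝ)-3)))
      ((s^3/2) * Real.arctan s + (-1/6 + s^2/2)) := by
    have hshift : (fun n : ℕ => (-1:ℝ)^(n+2) * s^(2*(n+2)) / (2*(2*((n+2:ℕ):ℝ)-3)))
        = fun n : ℕ => (s^3/2) * ((-1) ^ n * s ^ (2 * n + 1) / ((2 * n + 1 : ℕ) : ℝ)) := by
      funext n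
      push_cast
      rw [show (-1:ℝ)^(n+2) = (-1)^n by rw [pow_add]; norm_num,
        show 2*(n+2) = (2*n+1)+3 by ring, pow_add,
        show (2*((n:ℝ)+2)-3) = 2*(n:ℝ)+1 by ring]
      have hne : (2*(n:ℝ)+1) ≠ 0 := by positivity
      field_simp
    have := (hasSum_nat_add_iff (f := fun k : ℕ => (-1:ℝ)^k * s^(2*k) / (2*(2*(k:ℝ)-3))) 2).mp
      (by rw [show (fun n : ℕ => (-1:ℝ)^(n+2) * s^(2*(n+2)) / (2*(2*((n+2:ℕ):ℝ)-3)))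
            = fun n : ℕ => (s^3/2) * ((-1) ^ n * s ^ (2 * n + 1) / ((2 * n + 1 : ℕ) : ℝ)) from hshift]
          exact H.mul_left _)
    convert this using 1
    · rfl
    rw [Finset.sum_range_succ, Finset.sum_range_one]
    norm_num
  have h2' : HasSum (fun k : ℕ => -((-1:ℝ)^k * s^(2*k)) / (2*(2*(k:ℝ)-1)))
      ((s/2) * Real.arctan s + 1/2) := by
    have hshift : (fun n : ℕ => -((-1:ℝ)^(n+1) * s^(2*(n+1))) / (2*(2*((n+1:ℕ):ℝ)-1)))
        = fun n : ℕ => (s/2) * ((-1) ^ n * s ^ (2 * n + 1) / ((2 * n + 1 : ℕ) : ℝ)) := by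
      funext n
      push_cast
      rw [show (-1:ℝ)^(n+1) = (-1)^n * (-1) from pow_succ _ _,
        show 2*(n+1) = (2*n+1)+1 by ring, pow_add,
        show (2*((n:ℝ)+1)-1) = 2*(n:ℝ)+1 by ring]
      have hne : (2*(n:ℝ)+1) ≠ 0 := by positivity
      field_simp
    have := (hasSum_nat_add_iff (f := fun k : ℕ => -((-1:ℝ)^k * s^(2*k)) / (2*(2*(k:ℝ)-1))) 1).mp
      (by rw [show (fun n : ℕ => -((-1:ℝ)^(n+1) * s^(2*(n+1))) / (2*(2*((n+1:ℕ):ℝ)-1)))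
            = fun n : ℕ => (s/2) * ((-1) ^ n * s ^ (2 * n + 1) / ((2 * n + 1 : ℕ) : ℝ)) from hshift]
          exact H.mul_left _)
    convert this using 1
    · rfl
    rw [Finset.sum_range_one]
    norm_num
  have h3' : HasSum (fun k : ℕ => -((-1:ℝ)^k * s^(2*k)) / (2*(2*(k:ℝ)+1)))
      (-(1/(2*s)) * Real.arctan s) := by
    have := H.mul_left (-(1/(2*s)))
    convert this using 1
    · rfl
    funext n
    have hne : (2*(n:ℝ)+1) ≠ 0 := by positivity
    push_cast
    rw [pow_add]
    field_simp
  have h4' : HasSum (fun k : ℕ => ((-1:ℝ)^k * s^(2*k)) / (2*(2*(k:ℝ)+3)))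
      ((-(1/(2*s^3))) * (Real.arctan s - s)) := by
    have hH1 : HasSum (fun n : ℕ => (-(1/(2*s^3))) * ((-1) ^ (n+1) * s ^ (2 * (n+1) + 1) / ((2 * (n+1) + 1 : ℕ) : ℝ)))
        ((-(1/(2*s^3))) * (Real.arctan s - ((-1) ^ 0 * s ^ (2 * 0 + 1) / ((2 * 0 + 1 : ℕ) : ℝ)))) := by
      refine HasSum.mul_left _ ?_
      have h := (hasSum_nat_add_iff' (f := fun n : ℕ => (-1:ℝ) ^ n * s ^ (2 * n + 1) / ((2 * n + 1 : ℕ) : ℝ)) 1).mpr H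
      convert h using 1
      · rfl
      rw [Finset.sum_range_one]
    convert hH1 using 1
    · funext n
      have hne : (2*(n:ℝ)+3) ≠ 0 := by positivity
      push_cast
      rw [show (-1:ℝ)^(n+1) = (-1)^n * (-1) from pow_succ _ _,
        show 2*(n+1)+1 = 2*n+3 by ring, pow_add,
        show (2*((n:ℝ)+1)+1) = 2*(n:ℝ)+3 by ring]
      field_simp
    · norm_num
  have := ((h1'.add h2').add h3').add h4'
  convert this using 1
  funext k
  have hk1 : (2*(k:ℝ)-1) ≠ 0 := by
    rcases k with _ | n
    · norm_num
    · have : (0:ℝ) ≤ n := Nat.cast_nonneg n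
      push_cast
      intro h; linarith
  have hk3 : (2*(k:ℝ)-3) ≠ 0 := by
    rcases k with _ | _ | n
    · norm_num
    · norm_num
    · have : (0:ℝ) ≤ n := Nat.cast_nonneg n
      push_cast
      intro h; linarith
  have hk1' : (2*(k:ℝ)+1) ≠ 0 := by positivity
  have hk3' : (2*(k:ℝ)+3) ≠ 0 := by positivity
  have hd1 : ((k:ℝ)^2 - 1/4) ≠ 0 := by
    have : (k:ℝ)^2 - 1/4 = (2*(k:ℝ)-1)*(2*(k:ℝ)+1)/4 := by ring
    rw [this]
    exact div_ne_zero (mul_ne_zero hk1 hk1') (by norm_num)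
  have hd2 : ((k:ℝ)^2 - 9/4) ≠ 0 := by
    have : (k:ℝ)^2 - 9/4 = (2*(k:ℝ)-3)*(2*(k:ℝ)+3)/4 := by ring
    rw [this]
    exact div_ne_zero (mul_ne_zero hk3 hk3') (by norm_num)
  have hpow : (-(s^2):ℝ)^k = (-1)^k * s^(2*k) := by
    rw [neg_pow, pow_mul]
  have key : (k:ℝ)/(((k:ℝ)^2-1/4)*((k:ℝ)^2-9/4))
      = 1/(2*(2*(k:ℝ)-3)) - 1/(2*(2*(k:ℝ)-1)) - 1/(2*(2*(k:ℝ)+1)) + 1/(2*(2*(k:ℝ)+3)) := by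
    rw [div_eq_iff (mul_ne_zero hd1 hd2)]
    have e1 : (2*(k:ℝ)-1)⁻¹ * (2*(k:ℝ)-1) = 1 := inv_mul_cancel₀ hk1
    have e3 : (2*(k:ℝ)-3)⁻¹ * (2*(k:ℝ)-3) = 1 := inv_mul_cancel₀ hk3
    have e1' : (2*(k:ℝ)+1)⁻¹ * (2*(k:ℝ)+1) = 1 := inv_mul_cancel₀ hk1'
    have e3' : (2*(k:ℝ)+3)⁻¹ * (2*(k:ℝ)+3) = 1 := inv_mul_cancel₀ hk3'
    simp only [one_div, mul_inv]
    linear_combination (-((2*(k:ℝ)-1)*(2*(k:ℝ)+1)*(2*(k:ℝ)+3))/32) * e3 + ((2*(k:ℝ)-3)*(2*(k:ℝ)+1)*(2*(k:ℝ)+3)/32) * e1 + ((2*(k:ℝ)-3)*(2*(k:ℝ)-1)*(2*(k:ℝ)+3)/32) * e1' - ((2*(k:ℝ)-3)*(2*(k:ℝ)-1)*(2*(k:ℝ)+1)/32) * e3'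
  rw [hpow, mul_comm ((k:ℝ)/(((k:ℝ)^2-1/4)*((k:ℝ)^2-9/4))), key]
  ring

/-- For real `0 < ζ < 1`, the power series equals the closed form
`(15/32)(1+ζ)²(ζ⁻¹ - (1-ζ)ζ^{-3/2} arctan ζ^{1/2}) - 5/8`. -/
theorem stmt_5 :
    ∀ ζ : ℝ, 0 < ζ → ζ < 1 →
      (15 / 16) * (∑' k : ℕ,
          (k : ℝ) / (((k : ℝ) ^ 2 - 1 / 4) * ((k : ℝ) ^ 2 - 9 / 4)) * (-ζ) ^ k)
        = (15 / 32) * (1 + ζ) ^ 2 *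
            (ζ⁻¹ - (1 - ζ) * ζ ^ (-(3 : ℝ) / 2) * Real.arctan (ζ ^ ((1 : ℝ) / 2)))
          - 5 / 8 := by
  intro ζ hζ hζ1
  set s : ℝ := ζ ^ ((1:ℝ)/2) with hs
  have hspos : 0 < s := Real.rpow_pos_of_pos hζ _
  have hs1 : s < 1 := Real.rpow_lt_one hζ.le hζ1 (by norm_num)
  have hs2 : s ^ 2 = ζ := by
    rw [hs, ← Real.rpow_natCast (ζ ^ ((1:ℝ)/2)) 2, ← Real.rpow_mul hζ.le]
    norm_num
  have hsne : s ≠ 0 := ne_of_gt hspos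
  have hsum := aux_hasSum s hspos hs1
  rw [hs2] at hsum
  rw [hsum.tsum_eq]
  have h32 : ζ ^ (-(3:ℝ)/2) = (s^3)⁻¹ := by
    rw [← hs2, ← Real.rpow_natCast s 2, ← Real.rpow_mul hspos.le,
      show ((2:ℕ):ℝ) * (-(3:ℝ)/2) = -(3:ℝ) by push_cast; norm_num,
      Real.rpow_neg hspos.le, show (3:ℝ) = ((3:ℕ):ℝ) by norm_num, Real.rpow_natCast]
  rw [h32, ← hs2]
  field_simp
  ring
end

section
/- Let b > 0 and let F(α,β,γ;z) = ∑_{n≥0} z^n ∏_{j=0}^{n-1} (α+j)(β+j)/((1+j)(γ+j)) with α = -1/2, β = 2b, γ = 2b + 3/2. Then the function g(ζ) = ζ·F(-1/2, 2b, 2b+3/2; -ζ^{1/b}) of real ζ ∈ (0,1) (with ζ^{1/b} the real power) satisfies the differential equation D²g + (1/(2b))·((1 - ζ^{1/b})/(1 + ζ^{1/b}))·Dg = (1 + 1/(2b))·g, where D = ζ·d/dζ. -/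
/-- The coefficients of the Gauss hypergeometric series `F(-1/2, 2b, 2b+3/2; z)`. -/
noncomputable def stmt12c (b : ℝ) (n : ℕ) : ℝ :=
  ∏ j ∈ Finset.range n,
    ((-1 / 2 + (j : ℝ)) * (2 * b + (j : ℝ))) / ((1 + (j : ℝ)) * (2 * b + 3 / 2 + (j : ℝ)))

/-- `g(ζ) = ζ F(-1/2, 2b, 2b+3/2; -ζ^{1/b})` for real `ζ ∈ (0,1)`. -/
noncomputable def stmt12g (b : ℝ) (ζ : ℝ) : ℝ :=
  ζ * ∑' n : ℕ, stmt12c b n * (-(ζ ^ (1 / b))) ^ n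

namespace Stmt12Aux

open Real Set Filter

/-- signed coefficients -/
noncomputable def u (b : ℝ) (n : ℕ) : ℝ := stmt12c b n * (-1) ^ n

lemma abs_c_le_one (b : ℝ) (hb : 0 < b) (n : ℕ) : |stmt12c b n| ≤ 1 := by
  induction n with
  | zero => simp [stmt12c]
  | succ n ih =>
    rw [stmt12c, Finset.prod_range_succ, abs_mul]
    have hfac : |((-1 / 2 + (n : ℝ)) * (2 * b + (n : ℝ))) /
        ((1 + (n : ℝ)) * (2 * b + 3 / 2 + (n : ℝ)))| ≤ 1 := by
      have hn : (0:ℝ) ≤ n := n.cast_nonneg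
      rw [abs_div, div_le_one (by positivity), abs_mul, abs_mul]
      have h1 : |(-1 / 2 + (n : ℝ))| ≤ 1 + (n:ℝ) := by
        rw [abs_le]; constructor <;> nlinarith
      have h2 : |(2 * b + (n : ℝ))| ≤ 2 * b + 3 / 2 + (n:ℝ) := by
        rw [abs_of_pos (by positivity)]; linarith
      calc |(-1 / 2 + (n : ℝ))| * |(2 * b + (n : ℝ))|
          ≤ (1 + (n:ℝ)) * (2 * b + 3 / 2 + (n:ℝ)) := by
            apply mul_le_mul h1 h2 (abs_nonneg _) (by positivity)
        _ = |(1 + (n:ℝ))| * |(2 * b + 3 / 2 + (n:ℝ))| := by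
            rw [abs_of_pos (by positivity), abs_of_pos (by positivity)]
    have : |stmt12c b n| * |((-1 / 2 + (n : ℝ)) * (2 * b + (n : ℝ))) /
        ((1 + (n : ℝ)) * (2 * b + 3 / 2 + (n : ℝ)))| ≤ 1 * 1 :=
      mul_le_mul ih hfac (abs_nonneg _) zero_le_one
    simpa [stmt12c] using this

lemma abs_u_le_one (b : ℝ) (hb : 0 < b) (n : ℕ) : |u b n| ≤ 1 := by
  rw [u, abs_mul, abs_pow, abs_neg, abs_one, one_pow, mul_one]
  exact abs_c_le_one b hb n

lemma one_le_lam (b : ℝ) (hb : 0 < b) (n : ℕ) : (1:ℝ) ≤ 1 + (n:ℝ)/b := by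
  have : (0:ℝ) ≤ (n:ℝ)/b := by positivity
  linarith

lemma rpow_div_nat (z : ℝ) (hz : 0 ≤ z) (b : ℝ) (n : ℕ) :
    z ^ ((n:ℝ)/b) = (z ^ (1/b)) ^ n := by
  rw [← Real.rpow_natCast (z ^ (1/b)) n, ← Real.rpow_mul hz]
  congr 1; ring

lemma rpow_one_add (z : ℝ) (hz : 0 < z) (e : ℝ) : z ^ ((1:ℝ) + e) = z * z ^ e := by
  rw [Real.rpow_add hz, Real.rpow_one]

/-- geometric-type summability with quadratic weights -/
lemma sum_geom (b : ℝ) (hb : 0 < b) {q : ℝ} (hq0 : 0 ≤ q) (hq1 : q < 1) :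
    Summable fun n : ℕ => (1 + (n:ℝ)/b)^2 * q^n := by
  have hq : ‖q‖ < 1 := by rwa [Real.norm_eq_abs, abs_of_nonneg hq0]
  have h0 : Summable fun n : ℕ => q^n := summable_geometric_of_lt_one hq0 hq1
  have h1 : Summable fun n : ℕ => (n:ℝ)^1 * q^n :=
    summable_pow_mul_geometric_of_norm_lt_one 1 hq
  have h2 : Summable fun n : ℕ => (n:ℝ)^2 * q^n :=
    summable_pow_mul_geometric_of_norm_lt_one 2 hq
  have := (h0.add ((h1.mul_left (2/b)).add (h2.mul_left (1/b^2))))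
  refine this.congr fun n => ?_
  have hbne : b ≠ 0 := hb.ne'
  field_simp
  ring

/-- summability at a point of the series with coefficients dominated by `C λₙ²`. -/
lemma sum_aux (b C ζ : ℝ) (hb : 0 < b) (a : ℕ → ℝ)
    (ha : ∀ n, |a n| ≤ C * (1 + (n:ℝ)/b)^2) (h0 : 0 < ζ) (h1 : ζ < 1) :
    Summable fun n : ℕ => a n * ζ ^ (1 + (n:ℝ)/b) := by
  have hq0 : (0:ℝ) ≤ ζ ^ (1/b) := Real.rpow_nonneg h0.le _
  have hq1 : ζ ^ (1/b) < 1 := Real.rpow_lt_one h0.le h1 (by positivity)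
  refine Summable.of_norm_bounded ((sum_geom b hb hq0 hq1).mul_left C) fun n => ?_
  have hC : 0 ≤ C := by
    have h00 := ha 0
    simp at h00
    exact (abs_nonneg _).trans h00
  have hsplit : ζ ^ (1 + (n:ℝ)/b) = ζ * (ζ ^ (1/b)) ^ n := by
    rw [rpow_one_add ζ h0, rpow_div_nat ζ h0.le b n]
  have hle : ζ ^ (1 + (n:ℝ)/b) ≤ (ζ ^ (1/b)) ^ n := by
    rw [hsplit]
    nlinarith [pow_nonneg hq0 n]
  rw [Real.norm_eq_abs, abs_mul, abs_of_pos (Real.rpow_pos_of_pos h0 _)]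
  calc |a n| * ζ ^ (1 + (n:ℝ)/b)
      ≤ (C * (1 + (n:ℝ)/b)^2) * (ζ ^ (1/b)) ^ n := by
        apply mul_le_mul (ha n) hle (Real.rpow_pos_of_pos h0 _).le
        positivity
    _ = C * ((1 + (n:ℝ)/b)^2 * (ζ ^ (1/b)) ^ n) := by ring

/-- termwise differentiation of the series. -/
lemma key_deriv (b C : ℝ) (hb : 0 < b) (a : ℕ → ℝ)
    (ha : ∀ n, |a n| ≤ C * (1 + (n:ℝ)/b)) {ζ : ℝ} (h0 : 0 < ζ) (h1 : ζ < 1) :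
    HasDerivAt (fun z : ℝ => ∑' n : ℕ, a n * z ^ (1 + (n:ℝ)/b))
      (∑' n : ℕ, a n * (1 + (n:ℝ)/b) * ζ ^ ((n:ℝ)/b)) ζ := by
  have hC : 0 ≤ C := by
    have h00 := ha 0
    simp at h00
    exact (abs_nonneg _).trans h00
  set r : ℝ := (1 + ζ)/2 with hrdef
  have hr0 : 0 < r := by rw [hrdef]; linarith
  have hr1 : r < 1 := by rw [hrdef]; linarith
  have hζr : ζ < r := by rw [hrdef]; linarith
  set q : ℝ := r ^ (1/b) with hqdef
  have hq0 : 0 ≤ q := Real.rpow_nonneg hr0.le _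
  have hq1 : q < 1 := Real.rpow_lt_one hr0.le hr1 (by positivity)
  have hu : Summable fun n : ℕ => C * ((1 + (n:ℝ)/b)^2 * q^n) :=
    (sum_geom b hb hq0 hq1).mul_left C
  refine hasDerivAt_tsum_of_isPreconnected (F := ℝ)
    (u := fun n : ℕ => C * ((1 + (n:ℝ)/b)^2 * q^n))
    (g := fun (n : ℕ) (z : ℝ) => a n * z ^ (1 + (n:ℝ)/b))
    (g' := fun (n : ℕ) (y : ℝ) => a n * (1 + (n:ℝ)/b) * y ^ ((n:ℝ)/b)) hu isOpen_Ioo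
    (convex_Ioo (0:ℝ) r).isPreconnected (fun n y hy => ?_) (fun n y hy => ?_)
    (show ζ ∈ Ioo (0:ℝ) r from ⟨h0, hζr⟩) ?_ ⟨h0, hζr⟩
  · -- HasDerivAt for each term
    have H := (Real.hasDerivAt_rpow_const (x := y) (p := 1 + (n:ℝ)/b)
      (Or.inl hy.1.ne')).const_mul (a n)
    refine H.congr_deriv ?_
    rw [show (1 + (n:ℝ)/b) - 1 = (n:ℝ)/b by ring]
    ring
  · -- bound
    have hlam : (0:ℝ) < 1 + (n:ℝ)/b := lt_of_lt_of_le one_pos (one_le_lam b hb n)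
    have hyp : (0:ℝ) < y ^ ((n:ℝ)/b) := Real.rpow_pos_of_pos hy.1 _
    have hyr : y ^ ((n:ℝ)/b) ≤ q^n := by
      rw [hqdef, ← rpow_div_nat r hr0.le b n]
      exact Real.rpow_le_rpow hy.1.le hy.2.le (by positivity)
    rw [Real.norm_eq_abs, abs_mul, abs_mul, abs_of_pos hlam, abs_of_pos hyp]
    calc |a n| * (1 + (n:ℝ)/b) * y ^ ((n:ℝ)/b)
        ≤ (C * (1 + (n:ℝ)/b)) * (1 + (n:ℝ)/b) * q^n := by
          apply mul_le_mul _ hyr hyp.le (by positivity)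
          apply mul_le_mul (ha n) le_rfl hlam.le (by positivity)
      _ = C * ((1 + (n:ℝ)/b)^2 * q^n) := by ring
  · -- summable at ζ
    apply sum_aux b C ζ hb a _ h0 h1
    intro n
    refine (ha n).trans ?_
    have ht := one_le_lam b hb n
    nlinarith [mul_nonneg (mul_nonneg hC (by linarith : (0:ℝ) ≤ 1 + (n:ℝ)/b))
      (sub_nonneg.2 ht)]

/-- the coefficient recurrence. -/
lemma rec_w (b : ℝ) (hb : 0 < b) (n : ℕ) :
    u b (n+1) * ((1 + ((n:ℝ)+1)/b)^2 + (1 + ((n:ℝ)+1)/b)/(2*b) - (1 + 1/(2*b)))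
      = -(u b n * ((1 + (n:ℝ)/b)^2 - (1 + (n:ℝ)/b)/(2*b) - (1 + 1/(2*b)))) := by
  have hc : stmt12c b (n+1) = stmt12c b n *
      (((-1/2 + (n:ℝ)) * (2*b + (n:ℝ))) / ((1 + (n:ℝ)) * (2*b + 3/2 + (n:ℝ)))) := by
    rw [stmt12c, stmt12c, Finset.prod_range_succ]
  rw [u, u, hc, pow_succ]
  have h1 : (1:ℝ) + (n:ℝ) ≠ 0 := by positivity
  have h2 : 2*b + 3/2 + (n:ℝ) ≠ 0 := by positivity
  have hbne : b ≠ 0 := hb.ne'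
  field_simp
  ring

lemma g_eq (b : ℝ) (hb : 0 < b) {z : ℝ} (hz : 0 < z) :
    stmt12g b z = ∑' n : ℕ, u b n * z ^ (1 + (n:ℝ)/b) := by
  rw [stmt12g, ← tsum_mul_left]
  refine tsum_congr fun n => ?_
  rw [neg_pow, u, rpow_one_add z hz, rpow_div_nat z hz.le b n]
  ring

end Stmt12Aux

/-- `g` satisfies `D²g + (1/(2b))((1-ζ^{1/b})/(1+ζ^{1/b})) Dg = (1 + 1/(2b)) g` on `(0,1)`,
where `D = ζ d/dζ`. -/
theorem stmt_12 (b : ℝ) (hb : 0 < b) :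
    ∀ ζ : ℝ, 0 < ζ → ζ < 1 →
      ζ * deriv (fun z : ℝ => z * deriv (stmt12g b) z) ζ
        + (1 / (2 * b)) * ((1 - ζ ^ (1 / b)) / (1 + ζ ^ (1 / b)))
            * (ζ * deriv (stmt12g b) ζ)
        = (1 + 1 / (2 * b)) * stmt12g b ζ := by
  intro ζ h0 h1
  open Stmt12Aux Real Set Filter in
  -- abbreviations
  have hb2 : (0:ℝ) < 2*b := by linarith
  have ha1 : ∀ n : ℕ, |u b n| ≤ 1 * (1 + (n:ℝ)/b) := fun n => by
    have := abs_u_le_one b hb n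
    nlinarith [one_le_lam b hb n]
  -- derivative of g on (0,1)
  have hgderiv : ∀ z ∈ Ioo (0:ℝ) 1,
      deriv (stmt12g b) z = ∑' n : ℕ, u b n * (1 + (n:ℝ)/b) * z ^ ((n:ℝ)/b) := by
    intro z hz
    have hd := key_deriv b 1 hb (u b) ha1 hz.1 hz.2
    have heq : stmt12g b =ᶠ[nhds z] fun y => ∑' n : ℕ, u b n * y ^ (1 + (n:ℝ)/b) := by
      filter_upwards [isOpen_Ioo.mem_nhds hz] with y hy
      exact g_eq b hb hy.1
    exact ((hd.congr_of_eventuallyEq heq).deriv)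
  -- second function
  have ha2 : ∀ n : ℕ, |u b n * (1 + (n:ℝ)/b)| ≤ 1 * (1 + (n:ℝ)/b) := fun n => by
    rw [abs_mul, abs_of_pos (lt_of_lt_of_le one_pos (one_le_lam b hb n)), one_mul]
    have := abs_u_le_one b hb n
    nlinarith [one_le_lam b hb n]
  have hzfun : ∀ z ∈ Ioo (0:ℝ) 1,
      z * deriv (stmt12g b) z = ∑' n : ℕ, (u b n * (1 + (n:ℝ)/b)) * z ^ (1 + (n:ℝ)/b) := by
    intro z hz
    rw [hgderiv z hz, ← tsum_mul_left]
    refine tsum_congr fun n => ?_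
    rw [Stmt12Aux.rpow_one_add z hz.1]
    ring
  have hd2 := key_deriv b 1 hb (fun n => u b n * (1 + (n:ℝ)/b)) ha2 h0 h1
  have hderiv2 : deriv (fun z : ℝ => z * deriv (stmt12g b) z) ζ
      = ∑' n : ℕ, (u b n * (1 + (n:ℝ)/b)) * (1 + (n:ℝ)/b) * ζ ^ ((n:ℝ)/b) := by
    have heq : (fun z : ℝ => z * deriv (stmt12g b) z) =ᶠ[nhds ζ]
        fun z => ∑' n : ℕ, (u b n * (1 + (n:ℝ)/b)) * z ^ (1 + (n:ℝ)/b) := by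
      filter_upwards [isOpen_Ioo.mem_nhds (show ζ ∈ Ioo (0:ℝ) 1 from ⟨h0, h1⟩)] with y hy
      exact hzfun y hy
    exact (hd2.congr_of_eventuallyEq heq).deriv
  -- the three series
  set A : ℕ → ℝ := fun n => (u b n * (1 + (n:ℝ)/b)^2) * ζ ^ (1 + (n:ℝ)/b) with hA
  set B : ℕ → ℝ := fun n => (u b n * (1 + (n:ℝ)/b)) * ζ ^ (1 + (n:ℝ)/b) with hB
  set C : ℕ → ℝ := fun n => u b n * ζ ^ (1 + (n:ℝ)/b) with hC
  have sA : Summable A := by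
    apply Stmt12Aux.sum_aux b 1 ζ hb _ _ h0 h1
    intro n
    rw [abs_mul, abs_of_pos (show (0:ℝ) < (1 + (n:ℝ)/b)^2 by positivity)]
    have := abs_u_le_one b hb n
    nlinarith [one_le_lam b hb n, sq_nonneg (1 + (n:ℝ)/b)]
  have sB : Summable B := by
    apply Stmt12Aux.sum_aux b 1 ζ hb _ _ h0 h1
    intro n
    rw [abs_mul, abs_of_pos (lt_of_lt_of_le one_pos (one_le_lam b hb n))]
    have := abs_u_le_one b hb n
    nlinarith [one_le_lam b hb n]
  have sC : Summable C := by
    apply Stmt12Aux.sum_aux b 1 ζ hb _ _ h0 h1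
    intro n
    have := abs_u_le_one b hb n
    nlinarith [one_le_lam b hb n]
  -- rewrite the goal in terms of the sums
  have e1 : ζ * deriv (fun z : ℝ => z * deriv (stmt12g b) z) ζ = ∑' n, A n := by
    rw [hderiv2, ← tsum_mul_left]
    refine tsum_congr fun n => ?_
    simp only [hA]
    rw [Stmt12Aux.rpow_one_add ζ h0]
    ring
  have e2 : ζ * deriv (stmt12g b) ζ = ∑' n, B n := by
    rw [hgderiv ζ ⟨h0, h1⟩, ← tsum_mul_left]
    refine tsum_congr fun n => ?_
    simp only [hB]
    rw [Stmt12Aux.rpow_one_add ζ h0]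
    ring
  have e3 : stmt12g b ζ = ∑' n, C n := Stmt12Aux.g_eq b hb h0
  rw [e1, e2, e3]
  set x : ℝ := ζ ^ (1/b) with hx
  have hx0 : 0 ≤ x := Real.rpow_nonneg h0.le _
  have hx1 : (0:ℝ) < 1 + x := by linarith
  -- shift identity : x * ζ^{λ n} = ζ^{λ (n+1)}
  have hshift : ∀ n : ℕ, x * ζ ^ (1 + (n:ℝ)/b) = ζ ^ (1 + ((n:ℝ)+1)/b) := by
    intro n
    rw [hx, ← Real.rpow_add h0]
    congr 1
    field_simp
    ring
  -- key identity
  have hAs := sA.hasSum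
  have hBs := sB.hasSum
  have hCs := sC.hasSum
  set TA := ∑' n, A n
  set TB := ∑' n, B n
  set TC := ∑' n, C n
  have key : (TA + (1/(2*b)) * TB - (1 + 1/(2*b)) * TC)
      + (x * TA - (1/(2*b)) * (x * TB) - (1 + 1/(2*b)) * (x * TC)) = 0 := by
    set w : ℕ → ℝ := fun n =>
      u b n * ((1 + (n:ℝ)/b)^2 + (1 + (n:ℝ)/b)/(2*b) - (1 + 1/(2*b))) with hw
    set f : ℕ → ℝ := fun n => w n * ζ ^ (1 + (n:ℝ)/b) with hf
    have hWf : HasSum f (TA + (1/(2*b)) * TB - (1 + 1/(2*b)) * TC) := by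
      have h := (hAs.add (hBs.mul_left (1/(2*b)))).sub (hCs.mul_left (1 + 1/(2*b)))
      suffices hfe : f = fun b_1 => A b_1 + 1 / (2 * b) * B b_1 - (1 + 1 / (2 * b)) * C b_1 by rw [hfe]; exact h
      funext n
      simp only [hf, hw, hA, hB, hC]
      ring
    have hf0 : f 0 = 0 := by
      simp only [hf, hw, Nat.cast_zero, zero_div, add_zero]
      ring
    have hshiftW : HasSum (fun n => f (n+1)) (TA + (1/(2*b)) * TB - (1 + 1/(2*b)) * TC) := by
      refine (hasSum_nat_add_iff 1).mpr ?_
      simpa [hf0] using hWf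
    have hVf : HasSum (fun n => x * A n - (1/(2*b)) * (x * B n) - (1 + 1/(2*b)) * (x * C n))
        (x * TA - (1/(2*b)) * (x * TB) - (1 + 1/(2*b)) * (x * TC)) :=
      ((hAs.mul_left x).sub ((hBs.mul_left x).mul_left (1/(2*b)))).sub
        ((hCs.mul_left x).mul_left (1 + 1/(2*b)))
    have hVeq : (fun n => x * A n - (1/(2*b)) * (x * B n) - (1 + 1/(2*b)) * (x * C n))
        = fun n => -(f (n+1)) := by
      funext n
      have hr := Stmt12Aux.rec_w b hb n
      simp only [hf, hw, hA, hB, hC]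
      push_cast
      rw [← hshift n]
      linear_combination (x * ζ ^ (1 + (n:ℝ)/b)) * hr
    rw [hVeq] at hVf
    have := hVf.unique hshiftW.neg
    linarith [this]
  -- conclude
  have hxne : (1:ℝ) + x ≠ 0 := hx1.ne'
  have hdiv : (1 - x)/(1 + x) * (1 + x) = 1 - x := div_mul_cancel₀ _ hxne
  have hmul : (TA + (1/(2*b)) * ((1 - x)/(1 + x)) * TB - (1 + 1/(2*b)) * TC) * (1 + x) = 0 := by
    linear_combination key + (1/(2*b)) * TB * hdiv
  have h2 := (mul_eq_zero.mp hmul).resolve_right hxne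
  linarith [h2]
end
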